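/- arXiv:2001.06095 — 5 statements merged into one kernel-verified Lean document; each statement's English description precedes it below -/
import Mathlib

section
/- Let A be an n×n real matrix all of whose principal minors are positive (a P-matrix). Then for every nonzero vector x ∈ ℝⁿ there exists an index i such that x_i · (Ax)_i > 0. -/
/-- `A` is a P-matrix: every principal minor (determinant of the submatrix keeping
rows and columns indexed by a nonempty subset `K`) is positive. -/
def IsPMatrix {n : ℕ} (A : Matrix (Fin n) (Fin n) ℝ) : Prop :=
  ∀ K : Finset (Fin n), K.Nonempty →
    0 < (A.submatrix (fun i : {a // a ∈ K} => (i : Fin n))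
          (fun i : {a // a ∈ K} => (i : Fin n))).det

/-- General-index version of the P-matrix property. -/
def PMat {m : Type} [Fintype m] [DecidableEq m] (B : Matrix m m ℝ) : Prop :=
  ∀ K : Finset m, K.Nonempty →
    0 < (B.submatrix (fun i : {a // a ∈ K} => (i : m))
          (fun i : {a // a ∈ K} => (i : m))).det

lemma PMat.det_pos {m : Type} [Fintype m] [DecidableEq m] [Nonempty m]
    {B : Matrix m m ℝ} (h : PMat B) : 0 < B.det := by
  have h2 := h Finset.univ Finset.univ_nonempty
  let e : {a // a ∈ (Finset.univ : Finset m)} ≃ m :=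
    ⟨fun a => a.1, fun a => ⟨a, Finset.mem_univ a⟩, fun _ => rfl, fun _ => rfl⟩
  rwa [show (fun i : {a // a ∈ (Finset.univ : Finset m)} => (i : m)) = ⇑e from rfl,
    Matrix.det_submatrix_equiv_self] at h2

lemma PMat.submatrix {m m' : Type} [Fintype m] [DecidableEq m] [Fintype m'] [DecidableEq m']
    {B : Matrix m m ℝ} (h : PMat B) (f : m' → m) (hf : Function.Injective f) :
    PMat (B.submatrix f f) := by
  intro K hK
  set K' : Finset m := K.image f with hK'def
  have hK' : K'.Nonempty := hK.image f
  have hbij : Function.Bijective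
      (fun a : {a // a ∈ K} => (⟨f a.1, Finset.mem_image_of_mem f a.2⟩ : {a // a ∈ K'})) := by
    constructor
    · intro a b hab
      exact Subtype.ext (hf (congrArg Subtype.val hab))
    · rintro ⟨b, hb⟩
      obtain ⟨a, ha, rfl⟩ := Finset.mem_image.mp hb
      exact ⟨⟨a, ha⟩, rfl⟩
  set e := Equiv.ofBijective _ hbij
  have key : (B.submatrix f f).submatrix
        (fun i : {a // a ∈ K} => (i : m')) (fun i : {a // a ∈ K} => (i : m'))
      = (B.submatrix (fun i : {a // a ∈ K'} => (i : m))
          (fun i : {a // a ∈ K'} => (i : m))).submatrix e e := rfl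
  rw [key, Matrix.det_submatrix_equiv_self]
  exact h K' hK'

/-- The equivalence splitting off one index. -/
def sumEquivNe {m : Type} [DecidableEq m] (i : m) : {j : m // j ≠ i} ⊕ Unit ≃ m where
  toFun := Sum.elim (fun j => j.1) (fun _ => i)
  invFun j := if h : j = i then Sum.inr () else Sum.inl ⟨j, h⟩
  left_inv := by
    rintro (⟨j, hj⟩ | ⟨⟩)
    · simp [hj]
    · simp
  right_inv j := by by_cases h : j = i <;> simp [h]

/-- Determinant after replacing column `i` by the `i`-th standard basis vector:
the principal minor on the complement of `i`. -/
lemma det_updateColumn_single {m : Type} [Fintype m] [DecidableEq m]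
    (M : Matrix m m ℝ) (i : m) :
    (M.updateCol i (Pi.single i 1)).det
      = (M.submatrix (fun j : {j : m // j ≠ i} => (j : m))
          (fun j : {j : m // j ≠ i} => (j : m))).det := by
  rw [← Matrix.det_submatrix_equiv_self (sumEquivNe i)]
  have hblocks : (M.updateCol i (Pi.single i 1)).submatrix (sumEquivNe i) (sumEquivNe i)
      = Matrix.fromBlocks
          (M.submatrix (fun j : {j : m // j ≠ i} => (j : m))
            (fun j : {j : m // j ≠ i} => (j : m)))
          0 (Matrix.of fun _ j => M i (j : m)) (Matrix.of fun _ _ => (1 : ℝ)) := by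
    ext a b
    rcases a with a | a <;> rcases b with b | b
    · simp [sumEquivNe, Matrix.updateCol_apply, b.2]
    · simp [sumEquivNe, Matrix.updateCol_apply, Pi.single_apply, a.2]
    · simp [sumEquivNe, Matrix.updateCol_apply, b.2]
    · simp [sumEquivNe, Matrix.updateCol_apply, Pi.single_apply]
  rw [hblocks, Matrix.det_fromBlocks_zero₁₂]
  have : (Matrix.of fun _ _ => (1 : ℝ) : Matrix Unit Unit ℝ).det = 1 := by
    simp [Matrix.det_unique]
  rw [this, mul_one]

lemma key_det : ∀ (N : ℕ) (m : Type) [Fintype m] [DecidableEq m]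
    (B : Matrix m m ℝ) (d : m → ℝ),
    Fintype.card m + (Finset.univ.filter fun i => d i ≠ 0).card ≤ N →
    PMat B → (∀ i, 0 ≤ d i) → 0 < (B + Matrix.diagonal d).det := by
  intro N
  induction N with
  | zero =>
    intro m _ _ B d hle hB hd
    have hcard : Fintype.card m = 0 := by omega
    have : IsEmpty m := Fintype.card_eq_zero_iff.mp hcard
    simp [Matrix.det_isEmpty]
  | succ N ih =>
    intro m _ _ B d hle hB hd
    by_cases hd0 : ∀ i, d i = 0
    · have hdz : Matrix.diagonal d = 0 := by
        ext a b
        by_cases h : a = b <;> simp [Matrix.diagonal_apply, hd0, h]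
      rw [hdz, add_zero]
      cases isEmpty_or_nonempty m with
      | inl h => simp [Matrix.det_isEmpty]
      | inr h => exact hB.det_pos
    · push_neg at hd0
      obtain ⟨i, hi⟩ := hd0
      have hdi : 0 < d i := (hd i).lt_of_ne (Ne.symm hi)
      set d' : m → ℝ := Function.update d i 0 with hd'def
      set M' : Matrix m m ℝ := B + Matrix.diagonal d' with hM'def
      have hd'nonneg : ∀ j, 0 ≤ d' j := by
        intro j
        by_cases hj : j = i <;> simp [hd'def, Function.update, hj, hd j]
      have hfilter : (Finset.univ.filter fun j => d' j ≠ 0)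
          = (Finset.univ.filter fun j => d j ≠ 0).erase i := by
        ext j
        by_cases hj : j = i <;>
          simp [hd'def, Function.update, hj, hi]
      have himem : i ∈ Finset.univ.filter fun j => d j ≠ 0 := by simp [hi]
      have hcard' : (Finset.univ.filter fun j => d' j ≠ 0).card
          = (Finset.univ.filter fun j => d j ≠ 0).card - 1 := by
        rw [hfilter, Finset.card_erase_of_mem himem]
      have hcardpos : 1 ≤ (Finset.univ.filter fun j => d j ≠ 0).card :=
        Finset.card_pos.mpr ⟨i, himem⟩
      have hsplit : B + Matrix.diagonal d
          = M'.updateCol i ((fun j => M' j i) + d i • (Pi.single i 1 : m → ℝ)) := by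
        ext a b
        by_cases hb : b = i
        · by_cases ha : a = i <;>
            simp [hM'def, hd'def, Matrix.updateCol_apply, Matrix.diagonal_apply,
              Function.update, ha, hb, Pi.single_apply]
        · rcases eq_or_ne a b with rfl | hab
          · simp [hM'def, hd'def, Matrix.updateCol_apply, Matrix.diagonal_apply,
              Function.update, hb]
          · simp [hM'def, hd'def, Matrix.updateCol_apply, Matrix.diagonal_apply,
              Function.update, hb, hab]
      rw [hsplit, Matrix.det_updateCol_add, Matrix.det_updateCol_smul,
        Matrix.updateCol_eq_self, det_updateColumn_single]
      have pos1 : 0 < M'.det := by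
        apply ih m B d' _ hB hd'nonneg
        omega
      have pos2 : 0 < (M'.submatrix (fun j : {j : m // j ≠ i} => (j : m))
          (fun j : {j : m // j ≠ i} => (j : m))).det := by
        have hsub : M'.submatrix (fun j : {j : m // j ≠ i} => (j : m))
              (fun j : {j : m // j ≠ i} => (j : m))
            = B.submatrix (fun j : {j : m // j ≠ i} => (j : m))
                (fun j : {j : m // j ≠ i} => (j : m))
              + Matrix.diagonal (fun j : {j : m // j ≠ i} => d' (j : m)) := by
          ext a b
          rcases eq_or_ne a b with rfl | hab
          · simp [hM'def, Matrix.diagonal_apply]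
          · have : (a : m) ≠ (b : m) := fun h => hab (Subtype.ext h)
            simp [hM'def, Matrix.diagonal_apply, hab, this]
        rw [hsub]
        apply ih {j : m // j ≠ i} _ _ _ (hB.submatrix _ Subtype.val_injective)
          (fun j => hd'nonneg j)
        · have hc1 : Fintype.card {j : m // j ≠ i} = Fintype.card m - 1 := by
            simp [Fintype.card_subtype_compl]
          have hc2 : (Finset.univ.filter fun j : {j : m // j ≠ i} => d' (j : m) ≠ 0).card
              ≤ (Finset.univ.filter fun j => d' j ≠ 0).card := by
            refine Finset.card_le_card_of_injOn (fun j => (j : m)) (fun j hj => ?_)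
              (fun a _ b _ hab => Subtype.ext hab)
            simp only [Finset.mem_coe, Finset.mem_filter, Finset.mem_univ, true_and] at hj ⊢
            exact hj
          have hmpos : 1 ≤ Fintype.card m := Fintype.card_pos_iff.mpr ⟨i⟩
          omega
      positivity
  
theorem pmatrix_reverses_no_sign {n : ℕ} (A : Matrix (Fin n) (Fin n) ℝ)
    (hA : IsPMatrix A) :
    ∀ x : Fin n → ℝ, x ≠ 0 → ∃ i : Fin n, 0 < x i * A.mulVec x i := by
  intro x hx
  by_contra hcon
  push_neg at hcon
  have hPA : PMat A := hA
  set K : Finset (Fin n) := Finset.univ.filter (fun i => x i ≠ 0) with hKdef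
  have hKne : K.Nonempty := by
    obtain ⟨i, hi⟩ := Function.ne_iff.mp hx
    have hxi : x i ≠ 0 := by simpa using hi
    exact ⟨i, by simp [hKdef, hxi]⟩
  set B : Matrix {a // a ∈ K} {a // a ∈ K} ℝ :=
    A.submatrix (fun i : {a // a ∈ K} => (i : Fin n)) (fun i : {a // a ∈ K} => (i : Fin n))
    with hBdef
  set y : {a // a ∈ K} → ℝ := fun j => x (j : Fin n) with hydef
  have hy : ∀ j : {a // a ∈ K}, y j ≠ 0 := by
    rintro ⟨j, hj⟩
    simpa [hKdef, hydef] using hj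
  have hmul : ∀ j : {a // a ∈ K}, B.mulVec y j = A.mulVec x (j : Fin n) := by
    intro j
    have : A.mulVec x (j : Fin n) = ∑ k ∈ K, A (j : Fin n) k * x k := by
      have h0 : A.mulVec x (j : Fin n) = ∑ k, A (j : Fin n) k * x k := rfl
      rw [h0]
      symm
      apply Finset.sum_subset (Finset.subset_univ K)
      intro k _ hk
      have hxk : x k = 0 := by
        by_contra h
        exact hk (by simp [hKdef, h])
      simp [hxk]
    rw [this, ← Finset.sum_coe_sort K (fun k => A (j : Fin n) k * x k)]
    rfl
  set d : {a // a ∈ K} → ℝ := fun j => -(B.mulVec y j) / y j with hddef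
  have hd : ∀ j, 0 ≤ d j := by
    intro j
    have h1 : y j * B.mulVec y j ≤ 0 := by
      rw [hmul j]; exact hcon (j : Fin n)
    rw [hddef, div_nonneg_iff]
    rcases lt_trichotomy (y j) 0 with h | h | h
    · have hBv : 0 ≤ B.mulVec y j := by nlinarith
      exact Or.inr ⟨by linarith, h.le⟩
    · exact absurd h (hy j)
    · have hBv : B.mulVec y j ≤ 0 := by nlinarith
      exact Or.inl ⟨by linarith, h.le⟩
  have hker : (B + Matrix.diagonal d).mulVec y = 0 := by
    funext j
    rw [Matrix.add_mulVec]
    simp only [Pi.add_apply, Matrix.mulVec_diagonal, Pi.zero_apply, hddef]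
    field_simp
    rw [div_self (hy j)]
    ring
  have hyne : y ≠ 0 := by
    intro h
    obtain ⟨j, hj⟩ := hKne
    exact hy ⟨j, hj⟩ (congrFun h ⟨j, hj⟩)
  have hdet0 : (B + Matrix.diagonal d).det = 0 :=
    (Matrix.exists_mulVec_eq_zero_iff).mp ⟨y, hyne, hker⟩
  have hdetpos : 0 < (B + Matrix.diagonal d).det :=
    key_det _ {a // a ∈ K} B d le_rfl (hPA.submatrix _ Subtype.val_injective) hd
  linarith
end

section
/- Let A be an n×n real matrix such that for every nonzero vector x ∈ ℝⁿ there exists an index i with x_i · (Ax)_i > 0. Then every principal minor of A is positive, i.e., A is a P-matrix. -/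
lemma aux_det_pos {m : Type*} [Fintype m] [DecidableEq m] (B : Matrix m m ℝ)
    (hB : ∀ x : m → ℝ, x ≠ 0 → ∃ i, 0 < x i * B.mulVec x i) : 0 < B.det := by
  set f : ℝ → ℝ := fun t => (t • B + (1 - t) • (1 : Matrix m m ℝ)).det with hf
  have hcont : Continuous f := by
    apply Continuous.matrix_det
    fun_prop
  have hne : ∀ t ∈ Set.Icc (0:ℝ) 1, f t ≠ 0 := by
    intro t ht h0
    obtain ⟨x, hx, hmx⟩ := (Matrix.exists_mulVec_eq_zero_iff).2 h0
    obtain ⟨i, hi⟩ := hB x hx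
    have hxi : x i ≠ 0 := by
      intro h; rw [h] at hi; simp at hi
    have hmxi : t * (B.mulVec x i) + (1 - t) * x i = 0 := by
      have := congrFun hmx i
      simpa [Matrix.add_mulVec, Matrix.smul_mulVec, Matrix.one_mulVec] using this
    have key : t * (x i * B.mulVec x i) + (1 - t) * (x i * x i) = 0 := by
      have := congrArg (· * x i) hmxi
      ring_nf at this ⊢
      linarith [this]
    have h1 : 0 ≤ t * (x i * B.mulVec x i) := mul_nonneg ht.1 hi.le
    have h2 : 0 ≤ (1 - t) * (x i * x i) := mul_nonneg (by linarith [ht.2]) (mul_self_nonneg _)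
    have ht0 : t * (x i * B.mulVec x i) = 0 := by linarith
    have ht1 : (1 - t) * (x i * x i) = 0 := by linarith
    have hsq : 0 < x i * x i := mul_self_pos.2 hxi
    rcases eq_or_lt_of_le ht.1 with h | h
    · rw [← h] at ht1; nlinarith
    · nlinarith
  have hf0 : f 0 = 1 := by simp [hf]
  have hf1 : f 1 = B.det := by simp [hf]
  by_contra hle
  push_neg at hle
  have hne1 : f 1 ≠ 0 := hne 1 (by norm_num)
  have hf1neg : f 1 < 0 := by
    rw [hf1] at hne1 ⊢
    exact lt_of_le_of_ne hle hne1
  have := intermediate_value_Icc' (by norm_num : (0:ℝ) ≤ 1) hcont.continuousOn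
  have h0mem : (0:ℝ) ∈ Set.Icc (f 1) (f 0) := ⟨hf1neg.le, by rw [hf0]; norm_num⟩
  obtain ⟨c, hc, hfc⟩ := this h0mem
  exact hne c hc hfc

theorem sign_reversal_implies_pmatrix {n : ℕ} (A : Matrix (Fin n) (Fin n) ℝ)
    (hA : ∀ x : Fin n → ℝ, x ≠ 0 → ∃ i : Fin n, 0 < x i * A.mulVec x i) :
    IsPMatrix A := by
  intro K _
  set B := A.submatrix (fun i : {a // a ∈ K} => (i : Fin n))
          (fun i : {a // a ∈ K} => (i : Fin n)) with hB
  apply aux_det_pos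
  intro y hy
  set x : Fin n → ℝ := fun j => if h : j ∈ K then y ⟨j, h⟩ else 0 with hx
  have hxne : x ≠ 0 := by
    intro h
    apply hy
    funext j
    have := congrFun h (j : Fin n)
    simpa [hx, j.2] using this
  obtain ⟨i, hi⟩ := hA x hxne
  have hxi : x i ≠ 0 := by
    intro h; rw [h] at hi; simp at hi
  have hiK : i ∈ K := by
    by_contra h
    exact hxi (by simp [hx, h])
  refine ⟨⟨i, hiK⟩, ?_⟩
  have hmv : B.mulVec y ⟨i, hiK⟩ = A.mulVec x i := by
    simp only [Matrix.mulVec, Matrix.submatrix_apply, hB, dotProduct]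
    have h1 : ∀ j : {a // a ∈ K}, A i (j : Fin n) * y j = A i (j : Fin n) * x (j : Fin n) := by
      intro j; simp [hx, j.2]
    calc ∑ j : {a // a ∈ K}, A i (j : Fin n) * y j
        = ∑ j : {a // a ∈ K}, A i (j : Fin n) * x (j : Fin n) := by
          exact Finset.sum_congr rfl fun j _ => h1 j
      _ = ∑ j ∈ K, A i j * x j := Finset.sum_coe_sort K (fun j => A i j * x j)
      _ = ∑ j : Fin n, A i j * x j := by
          refine Finset.sum_subset (Finset.subset_univ K) ?_
          intro j _ hj
          simp [hx, hj]
  have : x i = y ⟨i, hiK⟩ := by simp [hx, hiK]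
  rw [hmv, ← this]
  exact hi
end

section
/- If A is an n×n P-matrix, then there exists μ > 0 such that A − μI is also a P-matrix, where I is the n×n identity matrix. -/
theorem pmatrix_sub_mu_id {n : ℕ} (A : Matrix (Fin n) (Fin n) ℝ)
    (hA : IsPMatrix A) :
    ∃ μ : ℝ, 0 < μ ∧ IsPMatrix (A - μ • (1 : Matrix (Fin n) (Fin n) ℝ)) := by
  have h : ∀ K : Finset (Fin n), K.Nonempty → ∀ᶠ μ : ℝ in nhds 0,
      0 < ((A - μ • (1 : Matrix (Fin n) (Fin n) ℝ)).submatrix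
            (fun i : {a // a ∈ K} => (i : Fin n))
            (fun i : {a // a ∈ K} => (i : Fin n))).det := by
    intro K hK
    have hc : Continuous fun μ : ℝ =>
        ((A - μ • (1 : Matrix (Fin n) (Fin n) ℝ)).submatrix
          (fun i : {a // a ∈ K} => (i : Fin n))
          (fun i : {a // a ∈ K} => (i : Fin n))).det := by
      apply Continuous.matrix_det
      apply continuous_matrix
      intro i j
      simp only [Matrix.submatrix_apply, Matrix.sub_apply, Matrix.smul_apply,
        smul_eq_mul]
      fun_prop
    have h0 : 0 < ((A - (0:ℝ) • (1 : Matrix (Fin n) (Fin n) ℝ)).submatrix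
          (fun i : {a // a ∈ K} => (i : Fin n))
          (fun i : {a // a ∈ K} => (i : Fin n))).det := by
      simpa using hA K hK
    exact (hc.tendsto 0).eventually (eventually_gt_nhds h0)
  have hall : ∀ᶠ μ : ℝ in nhds 0, ∀ K : Finset (Fin n), K.Nonempty →
      0 < ((A - μ • (1 : Matrix (Fin n) (Fin n) ℝ)).submatrix
            (fun i : {a // a ∈ K} => (i : Fin n))
            (fun i : {a // a ∈ K} => (i : Fin n))).det := by
    rw [Filter.eventually_all]
    intro K
    by_cases hK : K.Nonempty
    · exact (h K hK).mono fun μ hμ _ => hμ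
    · exact Filter.Eventually.of_forall fun μ h' => absurd h' hK
  have hne : (nhdsWithin (0:ℝ) (Set.Ioi 0)).NeBot := by infer_instance
  obtain ⟨μ, hμpos, hμ⟩ :=
    ((eventually_mem_nhdsWithin (s := Set.Ioi (0:ℝ)) (a := 0)).and
      (hall.filter_mono nhdsWithin_le_nhds)).exists
  exact ⟨μ, hμpos, hμ⟩
end

section
/- If A is an n×n P-matrix and μ > 0 is such that A − μI is a P-matrix, then for every λ with 0 ≤ λ ≤ μ, the matrix A − λI is a P-matrix. -/
open Matrix Finset


/-- Transfer principal minors along an embedding. -/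
lemma det_principal_transfer {m n' : ℕ} (B : Matrix (Fin n') (Fin n') ℝ)
    (f : Fin m ↪ Fin n') (K : Finset (Fin m)) :
    ((B.submatrix f f).submatrix (fun i : {a // a ∈ K} => (i : Fin m))
      (fun i : {a // a ∈ K} => (i : Fin m))).det
      = (B.submatrix (fun i : {a // a ∈ K.map f} => (i : Fin n'))
          (fun i : {a // a ∈ K.map f} => (i : Fin n'))).det := by
  have hbij : Function.Bijective (fun a : {a // a ∈ K} =>
      (⟨f a, Finset.mem_map_of_mem f a.2⟩ : {b // b ∈ K.map f})) := by
    constructor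
    · intro a b hab
      exact Subtype.ext (f.injective (congrArg Subtype.val hab))
    · rintro ⟨b, hb⟩
      rcases Finset.mem_map.mp hb with ⟨a, ha, rfl⟩
      exact ⟨⟨a, ha⟩, rfl⟩
  let e := Equiv.ofBijective _ hbij
  rw [← Matrix.det_submatrix_equiv_self e
    (B.submatrix (fun i : {a // a ∈ K.map f} => (i : Fin n'))
      (fun i : {a // a ∈ K.map f} => (i : Fin n')))]
  rfl

/-- A matrix with all principal minors positive stays positive-determinant after
adding a nonnegative diagonal. -/
lemma det_add_diagonal_pos : ∀ (m : ℕ) (B : Matrix (Fin m) (Fin m) ℝ),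
    (∀ K : Finset (Fin m),
      0 < (B.submatrix (fun i : {a // a ∈ K} => (i : Fin m))
            (fun i : {a // a ∈ K} => (i : Fin m))).det) →
    ∀ d : Fin m → ℝ, (∀ i, 0 ≤ d i) → 0 < (B + Matrix.diagonal d).det := by
  intro m
  induction m with
  | zero =>
    intro B hB d hd
    simp [Matrix.det_isEmpty]
  | succ m ih =>
    intro B hB d hd
    have hdetB : 0 < B.det := by
      have h := hB Finset.univ
      rw [← Matrix.det_submatrix_equiv_self (Equiv.subtypeUnivEquiv (fun x => Finset.mem_univ x)) B]
      convert h using 2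
      rfl
    suffices h : ∀ T : Finset (Fin (m+1)),
        0 < (B + Matrix.diagonal (fun i => if i ∈ T then d i else 0)).det by
      have := h Finset.univ
      simpa using this
    intro T
    induction T using Finset.induction_on with
    | empty => simpa using hdetB
    | @insert a T ha ihT =>
      set e : Fin (m+1) → ℝ := fun i => if i ∈ insert a T then d i else 0 with he
      set t : Fin (m+1) → ℝ := fun i => if i ∈ T then d i else 0 with ht
      set M : Matrix (Fin (m+1)) (Fin (m+1)) ℝ := B + Matrix.diagonal e with hM
      have hrow : M a = B a + d a • (Pi.single a 1 : Fin (m+1) → ℝ) := by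
        funext j
        by_cases hja : a = j
        · subst hja
          simp [hM, he, Matrix.diagonal_apply, Pi.single_apply]
        · simp [hM, he, Matrix.diagonal_apply, Pi.single_apply, hja, Ne.symm hja]
      have hMeq : M = M.updateRow a (B a + d a • (Pi.single a 1 : Fin (m+1) → ℝ)) := by
        rw [← hrow, Matrix.updateRow_eq_self]
      have hsplit : M.det = (M.updateRow a (B a)).det
          + d a * (M.updateRow a ((Pi.single a 1 : Fin (m+1) → ℝ))).det := by
        conv_lhs => rw [hMeq]
        rw [Matrix.det_updateRow_add, Matrix.det_updateRow_smul]
      have hterm1 : M.updateRow a (B a) = B + Matrix.diagonal t := by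
        ext i j
        by_cases hia : i = a
        · subst hia
          simp [Matrix.updateRow_apply, Matrix.diagonal_apply, ht, ha]
        · simp [Matrix.updateRow_apply, hia, hM, he, ht, Matrix.diagonal_apply]
      have hterm2 : (M.updateRow a ((Pi.single a 1 : Fin (m+1) → ℝ))).det
          = (M.submatrix a.succAbove a.succAbove).det := by
        rw [← Matrix.adjugate_apply, Matrix.adjugate_fin_succ_eq_det_submatrix]
        have : (-1 : ℝ) ^ ((a:ℕ) + (a:ℕ)) = 1 := by
          rw [← two_mul, pow_mul]; norm_num
        rw [this, one_mul]
      have hsub : M.submatrix a.succAbove a.succAbove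
          = B.submatrix a.succAbove a.succAbove + Matrix.diagonal (fun i => e (a.succAbove i)) := by
        rw [hM]
        ext i j
        by_cases hij : i = j
        · subst hij; simp [Matrix.diagonal_apply]
        · have hne : a.succAbove i ≠ a.succAbove j :=
            fun h => hij (Fin.succAbove_right_injective (p := a) h)
          simp [Matrix.diagonal_apply, hij, hne]
      have hpos2 : 0 < (M.submatrix a.succAbove a.succAbove).det := by
        rw [hsub]
        apply ih
        · intro K
          have := det_principal_transfer B (a.succAboveEmb) K
          rw [show (B.submatrix a.succAbove a.succAbove) = B.submatrix (a.succAboveEmb) (a.succAboveEmb) from rfl]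
          rw [this]
          exact hB _
        · intro i
          simp only [he]
          split
          · exact hd _
          · exact le_rfl
      rw [hsplit, hterm1]
      have : 0 ≤ d a * (M.updateRow a ((Pi.single a 1 : Fin (m+1) → ℝ))).det := by
        rw [hterm2]
        exact mul_nonneg (hd a) hpos2.le
      linarith [ihT]

theorem pmatrix_sub_lambda_id {n : ℕ} (A : Matrix (Fin n) (Fin n) ℝ) (μ : ℝ)
    (hμ : 0 < μ) (hA : IsPMatrix A)
    (hAμ : IsPMatrix (A - μ • (1 : Matrix (Fin n) (Fin n) ℝ))) :
    ∀ lam : ℝ, 0 ≤ lam → lam ≤ μ →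
      IsPMatrix (A - lam • (1 : Matrix (Fin n) (Fin n) ℝ)) := by
  intro lam hlam0 hlamμ K hK
  classical
  let ek : {a // a ∈ K} ≃ Fin K.card := K.equivFin
  let g : Fin K.card ↪ Fin n :=
    ⟨fun i => ((ek.symm i : {a // a ∈ K}) : Fin n), by
      intro i j h
      exact ek.symm.injective (Subtype.ext h)⟩
  rw [← Matrix.det_submatrix_equiv_self ek.symm
    ((A - lam • (1 : Matrix (Fin n) (Fin n) ℝ)).submatrix
      (fun i : {a // a ∈ K} => (i : Fin n)) (fun i : {a // a ∈ K} => (i : Fin n)))]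
  have hrepr : ((A - lam • (1 : Matrix (Fin n) (Fin n) ℝ)).submatrix
      (fun i : {a // a ∈ K} => (i : Fin n))
      (fun i : {a // a ∈ K} => (i : Fin n))).submatrix ⇑ek.symm ⇑ek.symm
      = (A - μ • (1 : Matrix (Fin n) (Fin n) ℝ)).submatrix g g
        + Matrix.diagonal (fun _ : Fin K.card => μ - lam) := by
    ext i j
    by_cases hij : i = j
    · subst hij
      simp [Matrix.one_apply, Matrix.diagonal_apply, Matrix.sub_apply, g]
      rfl
    · have hg : ((ek.symm i : {a // a ∈ K}) : Fin n) ≠ ((ek.symm j : {a // a ∈ K}) : Fin n) :=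
        fun h => hij (ek.symm.injective (Subtype.ext h))
      simp [Matrix.one_apply, Matrix.diagonal_apply, Matrix.sub_apply, hij, g, hg]
      rfl
  rw [hrepr]
  apply det_add_diagonal_pos
  · intro L
    rw [det_principal_transfer (A - μ • (1 : Matrix (Fin n) (Fin n) ℝ)) g L]
    rcases L.eq_empty_or_nonempty with hL | hL
    · subst hL
      simp only [Finset.map_empty]
      have : IsEmpty {a // a ∈ (∅ : Finset (Fin n))} := by
        constructor; rintro ⟨a, ha⟩; simp at ha
      exact lt_of_lt_of_eq one_pos Matrix.det_isEmpty.symm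
    · exact hAμ _ hL.map
  · intro i
    exact sub_nonneg.mpr hlamμ
end

section
/- Let a ≤ x in ℝⁿ (componentwise) and λ > 0. If G(y) := I(y) − λy is a P-function on a set containing a and x, and I(x) − I(a) ≤ λ(x − a) componentwise, then x = a. -/
/-- Quantitative Gale–Nikaido: if `G y = I y - lam • y` is a P-function on a set `R`
containing `a` and `x`, `a ≤ x` componentwise, and `I x - I a ≤ lam • (x - a)`
componentwise, then `x = a`. -/
theorem gale_nikaido_quantitative {n : ℕ} (lam : ℝ) (hlam : 0 < lam)
    (R : Set (Fin n → ℝ)) (I : (Fin n → ℝ) → (Fin n → ℝ))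
    (hP : ∀ u ∈ R, ∀ v ∈ R, u ≠ v →
      ∃ k : Fin n, 0 < (u k - v k) * ((I u k - lam * u k) - (I v k - lam * v k)))
    (a x : Fin n → ℝ) (ha : a ∈ R) (hx : x ∈ R)
    (hle : ∀ i, a i ≤ x i)
    (hIle : ∀ i, I x i - I a i ≤ lam * (x i - a i)) :
    x = a := by
  by_contra h
  obtain ⟨k, hk⟩ := hP x hx a ha h
  have h1 := hle k
  have h2 := hIle k
  nlinarith [hk]
end
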